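/- Let (A, R) be a finite SETAF where every argument has at least one attacker set. A function ℓ : A → {0, ½, 1} is a complete labelling if and only if for every argument a: ℓ(a) equals 1 minus the maximum over attacker sets S of a of the minimum over b ∈ S of ℓ(b), when all values involved lie in {0, ½, 1}. -/

import Mathlib

open Set Finset

/-- The attacker sets of argument `a` in the SETAF with attack relation `R`. -/
def attackers {A : Type*} [DecidableEq A] (R : Finset (Finset A × A)) (a : A) :
    Finset (Finset A) :=
  (R.filter fun p => p.2 = a).image Prod.fst

/-- For a finite SETAF where every argument has at least one attacker set
and `ℓ : A → {0, 1/2, 1}`, `ℓ` is a complete labelling iff for every `a`,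
`ℓ a = 1 - max over attacker sets S of a of (min over b ∈ S of ℓ b)`. -/
theorem stmt_19 {A : Type*} [Fintype A] [DecidableEq A]
    (R : Finset (Finset A × A)) (hR : ∀ p ∈ R, p.1.Nonempty)
    (hatt : ∀ a, (attackers R a).Nonempty)
    (ℓ : A → ℝ) (hℓ : ∀ a, ℓ a = 0 ∨ ℓ a = 1/2 ∨ ℓ a = 1) :
    ((∀ a, (ℓ a = 1 ↔ ∀ S ∈ attackers R a, ∃ b ∈ S, ℓ b = 0) ∧
           (ℓ a = 0 ↔ ∃ S ∈ attackers R a, ∀ b ∈ S, ℓ b = 1)) ↔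
      (∀ a, ℓ a = 1 - (attackers R a).fold max 0 (fun S => S.fold min 1 ℓ))) := by
  have hb0 : ∀ b, (0:ℝ) ≤ ℓ b := by
    intro b; rcases hℓ b with h|h|h <;> rw [h] <;> norm_num
  have hb1 : ∀ b, ℓ b ≤ 1 := by
    intro b; rcases hℓ b with h|h|h <;> rw [h] <;> norm_num
  set m : Finset A → ℝ := fun S => S.fold min 1 ℓ with hm
  set M : A → ℝ := fun a => (attackers R a).fold max 0 m with hM
  have hm0 : ∀ S, 0 ≤ m S := fun S =>
    Finset.le_fold_min 0 |>.2 ⟨by norm_num, fun b _ => hb0 b⟩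
  have hm1 : ∀ S, m S ≤ 1 := fun S => Finset.fold_min_le 1 |>.2 (Or.inl le_rfl)
  have hmEq1 : ∀ S, m S = 1 ↔ ∀ b ∈ S, ℓ b = 1 := by
    intro S
    constructor
    · intro h b hb
      have := (Finset.le_fold_min (1:ℝ)).1 (le_of_eq h.symm)
      exact le_antisymm (hb1 b) (this.2 b hb)
    · intro h
      exact le_antisymm (hm1 S)
        ((Finset.le_fold_min 1).2 ⟨le_rfl, fun b hb => (h b hb).ge⟩)
  have hmEq0 : ∀ S, m S = 0 ↔ ∃ b ∈ S, ℓ b = 0 := by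
    intro S
    constructor
    · intro h
      rcases (Finset.fold_min_le (0:ℝ)).1 h.le with h' | ⟨b, hb, hb'⟩
      · norm_num at h'
      · exact ⟨b, hb, le_antisymm hb' (hb0 b)⟩
    · rintro ⟨b, hb, hb'⟩
      exact le_antisymm ((Finset.fold_min_le 0).2 (Or.inr ⟨b, hb, hb'.le⟩)) (hm0 S)
  have hM0 : ∀ a, 0 ≤ M a := fun a => Finset.le_fold_max 0 |>.2 (Or.inl le_rfl)
  have hM1 : ∀ a, M a ≤ 1 := fun a =>
    Finset.fold_max_le 1 |>.2 ⟨by norm_num, fun S _ => hm1 S⟩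
  have hMeq0 : ∀ a, M a = 0 ↔ ∀ S ∈ attackers R a, m S = 0 := by
    intro a
    constructor
    · intro h S hS
      have := (Finset.fold_max_le (0:ℝ)).1 h.le
      exact le_antisymm (this.2 S hS) (hm0 S)
    · intro h
      exact le_antisymm
        ((Finset.fold_max_le 0).2 ⟨le_rfl, fun S hS => (h S hS).le⟩) (hM0 a)
  have hMeq1 : ∀ a, M a = 1 ↔ ∃ S ∈ attackers R a, m S = 1 := by
    intro a
    constructor
    · intro h
      rcases (Finset.le_fold_max (1:ℝ)).1 h.ge with h' | ⟨S, hS, hS'⟩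
      · norm_num at h'
      · exact ⟨S, hS, le_antisymm (hm1 S) hS'⟩
    · rintro ⟨S, hS, hS'⟩
      exact le_antisymm (hM1 a) ((Finset.le_fold_max 1).2 (Or.inr ⟨S, hS, hS'.ge⟩))
  have hmMem : ∀ S : Finset A, m S = 0 ∨ m S = 1/2 ∨ m S = 1 := by
    intro S
    induction S using Finset.induction_on with
    | empty => simp [hm]
    | insert _ _ hx ih =>
      rename_i b T
      have : m (insert b T) = min (ℓ b) (m T) := Finset.fold_insert hx
      rw [this]
      rcases min_choice (ℓ b) (m T) with h | h <;> rw [h]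
      · exact hℓ b
      · exact ih
  have hMMem : ∀ a, M a = 0 ∨ M a = 1/2 ∨ M a = 1 := by
    intro a
    have : ∀ T : Finset (Finset A),
        T.fold max (0:ℝ) m = 0 ∨ T.fold max 0 m = 1/2 ∨ T.fold max 0 m = 1 := by
      intro T
      induction T using Finset.induction_on with
      | empty => simp
      | insert _ _ hx ih =>
        rename_i S T'
        rw [Finset.fold_insert hx]
        rcases max_choice (m S) (T'.fold max 0 m) with h | h <;> rw [h]
        · exact hmMem S
        · exact ih
    exact this _
  constructor
  · intro h a
    show ℓ a = 1 - M a
    rcases hℓ a with ha | ha | ha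
    · have : M a = 1 := by
        obtain ⟨S, hS, hS'⟩ := (h a).2.1 ha
        exact (hMeq1 a).2 ⟨S, hS, (hmEq1 S).2 hS'⟩
      rw [ha, this]; norm_num
    · have hne0 : M a ≠ 0 := by
        intro h0
        have : ℓ a = 1 := (h a).1.2 fun S hS =>
          (hmEq0 S).1 ((hMeq0 a).1 h0 S hS)
        rw [ha] at this; norm_num at this
      have hne1 : M a ≠ 1 := by
        intro h1
        obtain ⟨S, hS, hS'⟩ := (hMeq1 a).1 h1
        have : ℓ a = 0 := (h a).2.2 ⟨S, hS, (hmEq1 S).1 hS'⟩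
        rw [ha] at this; norm_num at this
      rcases hMMem a with h' | h' | h'
      · exact absurd h' hne0
      · rw [ha, h']; norm_num
      · exact absurd h' hne1
    · have : M a = 0 := (hMeq0 a).2 fun S hS =>
        (hmEq0 S).2 ((h a).1.1 ha S hS)
      rw [ha, this]; norm_num
  · intro h a
    have ha : ℓ a = 1 - M a := h a
    constructor
    · constructor
      · intro h1 S hS
        have : M a = 0 := by linarith [ha ▸ h1]
        exact (hmEq0 S).1 ((hMeq0 a).1 this S hS)
      · intro h1
        have : M a = 0 := (hMeq0 a).2 fun S hS => (hmEq0 S).2 (h1 S hS)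
        rw [ha, this]; norm_num
    · constructor
      · intro h0
        have : M a = 1 := by linarith [ha ▸ h0]
        obtain ⟨S, hS, hS'⟩ := (hMeq1 a).1 this
        exact ⟨S, hS, (hmEq1 S).1 hS'⟩
      · rintro ⟨S, hS, hS'⟩
        have : M a = 1 := (hMeq1 a).2 ⟨S, hS, (hmEq1 S).2 hS'⟩
        rw [ha, this]; norm_num
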